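/- With U = [[A,B],[C,D]] unitary as above, define for parameters θ, φ ∈ ℝ the operator W := R_𝔥(θ) U* R_𝔨(φ) U, where R_𝔥(θ) = e^{iθ}P_𝔥 + e^{-iθ}(I − P_𝔥) and R_𝔨(φ) = e^{iφ}P_𝔨 + e^{-iφ}(I − P_𝔨). Then W has the block form W = [[P(A*A), i Q(A*A) A*B],[i Q̄(D*D) B*A, P̄(D*D)]] on 𝔥 ⊕ 𝔥^⊥, where P(x) := e^{iθ}(e^{-iφ} + 2i sin(φ) x) and Q(x) := 2 e^{iθ} sin(φ), and where P̄, Q̄ denote the polynomials with complex-conjugated coefficients. -/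

import Mathlib

open ContinuousLinearMap Complex Submodule Polynomial

lemma aux_projAdj
    {H : Type*} [NormedAddCommGroup H] [InnerProductSpace ℂ H] [CompleteSpace H]
    (𝔥 𝔨 : Submodule ℂ H) [CompleteSpace 𝔥] [CompleteSpace 𝔨]
    (U : H →L[ℂ] H) (A : 𝔥 →L[ℂ] 𝔨)
    (hA : ∀ x : 𝔥, A x = orthogonalProjection 𝔨 (U x)) (k : 𝔨) :
    orthogonalProjection 𝔥 (adjoint U ↑k) = adjoint A k := by
  apply ext_inner_right ℂ
  intro x
  rw [inner_orthogonalProjection_eq_of_mem_right, adjoint_inner_left, adjoint_inner_left, hA,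
    inner_orthogonalProjection_eq_of_mem_left]

lemma aux_R
    {H : Type*} [NormedAddCommGroup H] [InnerProductSpace ℂ H] [CompleteSpace H]
    (K : Submodule ℂ H) [CompleteSpace K] (c d : ℂ) (k : K) (k' : Kᗮ) :
    (c • (K.subtypeL ∘L orthogonalProjection K) + d • (1 - K.subtypeL ∘L orthogonalProjection K))
      ((k : H) + (k' : H)) = c • (k : H) + d • (k' : H) := by
  have hp : orthogonalProjection K ((k : H) + (k' : H)) = k := by
    rw [map_add, orthogonalProjection_mem_subspace_eq_self,
      orthogonalProjection_mem_subspace_orthogonalComplement_eq_zero k'.2, add_zero]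
  simp only [ContinuousLinearMap.add_apply, ContinuousLinearMap.smul_apply,
    ContinuousLinearMap.comp_apply, ContinuousLinearMap.sub_apply, ContinuousLinearMap.one_apply,
    Submodule.subtypeL_apply, hp]
  rw [add_sub_cancel_left]

lemma aux_unique
    {H : Type*} [NormedAddCommGroup H] [InnerProductSpace ℂ H] [CompleteSpace H]
    (K : Submodule ℂ H) [CompleteSpace K] (a a' : K) (b b' : Kᗮ)
    (h : (a : H) + (b : H) = (a' : H) + (b' : H)) : a = a' ∧ b = b' := by
  have h1 : a = a' := by
    have := congrArg (orthogonalProjection K) h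
    simpa [orthogonalProjection_mem_subspace_eq_self,
      orthogonalProjection_mem_subspace_orthogonalComplement_eq_zero b.2,
      orthogonalProjection_mem_subspace_orthogonalComplement_eq_zero b'.2] using this
  refine ⟨h1, Subtype.ext ?_⟩
  have h2 := h
  rw [h1] at h2
  exact add_left_cancel h2

open ContinuousLinearMap Complex Submodule Polynomial in
set_option maxHeartbeats 1000000 in
theorem stmt3
    {H : Type*} [NormedAddCommGroup H] [InnerProductSpace ℂ H] [CompleteSpace H]
    (𝔥 𝔨 : Submodule ℂ H) [CompleteSpace 𝔥] [CompleteSpace 𝔨]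
    (U : H →L[ℂ] H) (hU1 : adjoint U ∘L U = 1) (hU2 : U ∘L adjoint U = 1)
    (A : 𝔥 →L[ℂ] 𝔨) (B : 𝔥ᗮ →L[ℂ] 𝔨) (C : 𝔥 →L[ℂ] 𝔨ᗮ) (D : 𝔥ᗮ →L[ℂ] 𝔨ᗮ)
    (hA : ∀ x : 𝔥, A x = orthogonalProjection 𝔨 (U x))
    (hB : ∀ y : 𝔥ᗮ, B y = orthogonalProjection 𝔨 (U y))
    (hC : ∀ x : 𝔥, C x = orthogonalProjection 𝔨ᗮ (U x))
    (hD : ∀ y : 𝔥ᗮ, D y = orthogonalProjection 𝔨ᗮ (U y))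
    (θ φ : ℝ) (W : H →L[ℂ] H)
    (hW : W = (Complex.exp (θ * Complex.I) • (𝔥.subtypeL ∘L orthogonalProjection 𝔥) +
          Complex.exp (-θ * Complex.I) • (1 - 𝔥.subtypeL ∘L orthogonalProjection 𝔥)) ∘L
        (adjoint U ∘L
          ((Complex.exp (φ * Complex.I) • (𝔨.subtypeL ∘L orthogonalProjection 𝔨) +
            Complex.exp (-φ * Complex.I) • (1 - 𝔨.subtypeL ∘L orthogonalProjection 𝔨)) ∘L U)))
    (Ppoly Qpoly : Polynomial ℂ)
    (hPpoly : Ppoly = Polynomial.C (Complex.exp (θ * Complex.I) * Complex.exp (-φ * Complex.I)) +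
      Polynomial.C (Complex.exp (θ * Complex.I) * (2 * Complex.I * Real.sin φ)) * Polynomial.X)
    (hQpoly : Qpoly = Polynomial.C (2 * Complex.exp (θ * Complex.I) * Real.sin φ)) :
    ∀ x : 𝔥, ∀ y : 𝔥ᗮ,
      W ((x : H) + (y : H)) =
        ((Polynomial.aeval (adjoint A ∘L A) Ppoly x +
          (Complex.I • (Polynomial.aeval (adjoint A ∘L A) Qpoly ∘L (adjoint A ∘L B))) y : 𝔥) : H) +
        (((Complex.I • (Polynomial.aeval (adjoint D ∘L D) (Qpoly.map (starRingEnd ℂ)) ∘L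
            (adjoint B ∘L A))) x +
          Polynomial.aeval (adjoint D ∘L D) (Ppoly.map (starRingEnd ℂ)) y : 𝔥ᗮ) : H) := by
  intro x y
  -- scalar facts
  have hsin : (2:ℂ) * Complex.I * (Real.sin φ : ℂ) =
      Complex.exp (φ * Complex.I) - Complex.exp (-φ * Complex.I) := by
    rw [Complex.ofReal_sin]
    simp only [Complex.exp_mul_I, Complex.cos_neg, Complex.sin_neg]
    ring
  have hc1 : Complex.exp (φ * Complex.I) =
      Complex.exp (-φ * Complex.I) + 2 * Complex.I * (Real.sin φ : ℂ) := by
    linear_combination -hsin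
  have hconjθ : (starRingEnd ℂ) (Complex.exp (θ * Complex.I)) = Complex.exp (-θ * Complex.I) := by
    rw [← Complex.exp_conj]; congr 1; simp [Complex.conj_I]
  have hconjφ : (starRingEnd ℂ) (Complex.exp (-φ * Complex.I)) = Complex.exp (φ * Complex.I) := by
    rw [← Complex.exp_conj]; congr 1; simp [Complex.conj_I]
  -- projection-adjoint facts
  have hcA := aux_projAdj 𝔥 𝔨 U A hA
  have hcB := aux_projAdj 𝔥ᗮ 𝔨 U B hB
  have hcC := aux_projAdj 𝔥 𝔨ᗮ U C hC
  have hcD := aux_projAdj 𝔥ᗮ 𝔨ᗮ U D hD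
  -- decompositions
  have hUx : ∀ x : 𝔥, (U x : H) = ↑(A x) + ↑(C x) := fun x => by
    rw [hA, hC]
    exact (Submodule.starProjection_add_starProjection_orthogonal (K := 𝔨) (U x)).symm
  have hUy : ∀ y : 𝔥ᗮ, (U y : H) = ↑(B y) + ↑(D y) := fun y => by
    rw [hB, hD]
    exact (Submodule.starProjection_add_starProjection_orthogonal (K := 𝔨) (U y)).symm
  have hUk : ∀ k : 𝔨, adjoint U ↑k = ↑(adjoint A k) + ↑(adjoint B k) := fun k => by
    rw [← hcA, ← hcB]
    exact (Submodule.starProjection_add_starProjection_orthogonal (K := 𝔥) _).symm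
  have hUk' : ∀ k : 𝔨ᗮ, adjoint U ↑k = ↑(adjoint C k) + ↑(adjoint D k) := fun k => by
    rw [← hcC, ← hcD]
    exact (Submodule.starProjection_add_starProjection_orthogonal (K := 𝔥) _).symm
  have hUU : ∀ z : H, adjoint U (U z) = z := fun z => by
    rw [← ContinuousLinearMap.comp_apply, hU1, ContinuousLinearMap.one_apply]
  -- unitarity block identities
  have ex : ((adjoint A (A x) + adjoint C (C x) : 𝔥) : H) +
      ((adjoint B (A x) + adjoint D (C x) : 𝔥ᗮ) : H) = ((x : 𝔥) : H) + ((0 : 𝔥ᗮ) : H) := by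
    have e : adjoint U (U (x : H)) = (x : H) := hUU (x : H)
    rw [hUx x, map_add, hUk (A x), hUk' (C x)] at e
    push_cast
    rw [← e]
    abel
  have ey : ((adjoint A (B y) + adjoint C (D y) : 𝔥) : H) +
      ((adjoint B (B y) + adjoint D (D y) : 𝔥ᗮ) : H) = ((0 : 𝔥) : H) + ((y : 𝔥ᗮ) : H) := by
    have e : adjoint U (U (y : H)) = (y : H) := hUU (y : H)
    rw [hUy y, map_add, hUk (B y), hUk' (D y)] at e
    push_cast
    rw [← e]
    abel
  obtain ⟨idx1, idx2⟩ := aux_unique 𝔥 _ _ _ _ ex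
  obtain ⟨idy1, idy2⟩ := aux_unique 𝔥 _ _ _ _ ey
  have hCC : adjoint C (C x) = x - adjoint A (A x) := eq_sub_of_add_eq' idx1
  have hDC : adjoint D (C x) = -(adjoint B (A x)) := eq_neg_of_add_eq_zero_right idx2
  have hCD : adjoint C (D y) = -(adjoint A (B y)) := eq_neg_of_add_eq_zero_right idy1
  have hBB : adjoint B (B y) = y - adjoint D (D y) := eq_sub_of_add_eq idy2
  -- main computation
  set c1 := Complex.exp (φ * Complex.I) with hc1def
  set c2 := Complex.exp (-φ * Complex.I) with hc2def
  set d1 := Complex.exp (θ * Complex.I) with hd1def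
  set d2 := Complex.exp (-θ * Complex.I) with hd2def
  have step1 : U ((x : H) + (y : H)) = ((A x + B y : 𝔨) : H) + ((C x + D y : 𝔨ᗮ) : H) := by
    push_cast
    rw [map_add, hUx x, hUy y]
    abel
  have step2 : (c1 • (𝔨.subtypeL ∘L orthogonalProjection 𝔨) +
      c2 • (1 - 𝔨.subtypeL ∘L orthogonalProjection 𝔨)) (U ((x : H) + (y : H))) =
      c1 • ((A x + B y : 𝔨) : H) + c2 • ((C x + D y : 𝔨ᗮ) : H) := by
    rw [step1]; exact aux_R 𝔨 c1 c2 _ _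
  have step3 : adjoint U (c1 • ((A x + B y : 𝔨) : H) + c2 • ((C x + D y : 𝔨ᗮ) : H)) =
      ((c1 • adjoint A (A x + B y) + c2 • adjoint C (C x + D y) : 𝔥) : H) +
      ((c1 • adjoint B (A x + B y) + c2 • adjoint D (C x + D y) : 𝔥ᗮ) : H) := by
    rw [map_add, map_smul, map_smul, hUk, hUk']
    push_cast
    module
  have step4 := aux_R 𝔥 d1 d2
    (c1 • adjoint A (A x + B y) + c2 • adjoint C (C x + D y))
    (c1 • adjoint B (A x + B y) + c2 • adjoint D (C x + D y))
  have g1 : d1 • (c1 • adjoint A (A x + B y) + c2 • adjoint C (C x + D y)) =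
      Polynomial.aeval (adjoint A ∘L A) Ppoly x +
        (Complex.I • (Polynomial.aeval (adjoint A ∘L A) Qpoly ∘L (adjoint A ∘L B))) y := by
    rw [map_add (adjoint A), map_add (adjoint C), hCC, hCD, hPpoly, hQpoly]
    simp only [map_add, aeval_C, aeval_mul, aeval_X, Algebra.algebraMap_eq_smul_one,
      ContinuousLinearMap.add_apply, ContinuousLinearMap.smul_apply,
      ContinuousLinearMap.one_apply, ContinuousLinearMap.mul_apply,
      ContinuousLinearMap.comp_apply, ContinuousLinearMap.coe_smul', Pi.smul_apply]
    rw [hc1]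
    match_scalars <;> ring
  have hconj2 : (starRingEnd ℂ) (2:ℂ) = 2 := map_ofNat _ 2
  have hQc : Qpoly.map (starRingEnd ℂ) =
      Polynomial.C (2 * d2 * (Real.sin φ : ℂ)) := by
    rw [hQpoly, Polynomial.map_C]
    congr 1
    rw [map_mul, map_mul, hconj2, hconjθ, Complex.conj_ofReal]
  have hPc : Ppoly.map (starRingEnd ℂ) =
      Polynomial.C (d2 * c1) + Polynomial.C (d2 * (-(2 * Complex.I * (Real.sin φ : ℂ)))) *
        Polynomial.X := by
    have e1 : (starRingEnd ℂ) (d1 * c2) = d2 * c1 := by rw [map_mul, hconjθ, hconjφ]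
    have e2 : (starRingEnd ℂ) (d1 * (2 * Complex.I * (Real.sin φ : ℂ))) =
        d2 * (-(2 * Complex.I * (Real.sin φ : ℂ))) := by
      rw [map_mul, hconjθ, map_mul, map_mul, hconj2, Complex.conj_I, Complex.conj_ofReal]
      ring
    rw [hPpoly, Polynomial.map_add, Polynomial.map_mul, Polynomial.map_C, Polynomial.map_C,
      Polynomial.map_X, e1, e2]
  have g2 : d2 • (c1 • adjoint B (A x + B y) + c2 • adjoint D (C x + D y)) =
      (Complex.I • (Polynomial.aeval (adjoint D ∘L D) (Qpoly.map (starRingEnd ℂ)) ∘L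
          (adjoint B ∘L A))) x +
        Polynomial.aeval (adjoint D ∘L D) (Ppoly.map (starRingEnd ℂ)) y := by
    rw [map_add (adjoint B), map_add (adjoint D), hBB, hDC, hQc, hPc]
    simp only [map_add, aeval_C, aeval_mul, aeval_X, Algebra.algebraMap_eq_smul_one,
      ContinuousLinearMap.add_apply, ContinuousLinearMap.smul_apply,
      ContinuousLinearMap.one_apply, ContinuousLinearMap.mul_apply,
      ContinuousLinearMap.comp_apply, ContinuousLinearMap.coe_smul', Pi.smul_apply]
    rw [hc1]
    match_scalars <;> ring
  calc W ((x : H) + (y : H))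
      = (d1 • (𝔥.subtypeL ∘L orthogonalProjection 𝔥) +
          d2 • (1 - 𝔥.subtypeL ∘L orthogonalProjection 𝔥))
          (adjoint U ((c1 • (𝔨.subtypeL ∘L orthogonalProjection 𝔨) +
            c2 • (1 - 𝔨.subtypeL ∘L orthogonalProjection 𝔨)) (U ((x : H) + (y : H))))) := by
        rw [hW]; simp only [ContinuousLinearMap.comp_apply]
    _ = d1 • ((c1 • adjoint A (A x + B y) + c2 • adjoint C (C x + D y) : 𝔥) : H) +
        d2 • ((c1 • adjoint B (A x + B y) + c2 • adjoint D (C x + D y) : 𝔥ᗮ) : H) := by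
        rw [step2, step3, step4]
    _ = _ := by
        rw [← g1, ← g2]
        push_cast
        rfl
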